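/- Let n ≥ 2 and let N be an n×n matrix over ℤ all of whose entries lie in {0,1} and which satisfies N² = 0 (so N is the adjacency matrix of a bipartite quiver without loops or parallel arrows). Set C = I − N, let φ(X) = det(X•C + Cᵀ) ∈ ℤ[X], and write a₁ = φ.coeff(n−1), a₂ = φ.coeff(n−2). Let e = Σ_{i,j} N_{ij} be the number of arrows, d_i = Σ_j N_{ij} + Σ_j N_{ji} the degree of vertex i, and q = Σ_{i<j} C((N·Nᵀ)_{ij}, 2) (the number of full subquivers of type Ã_{2,2}). Then a₁ = n − e and 2·a₂ = (n−e)(n−1−e) + 2e − 4q − Σ_{i=1}^{n} d_i(d_i − 1). -/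

import Mathlib

open Polynomial Matrix Finset

lemma pair_eq_pair {n : ℕ} {a b c d : Fin n} (hab : a < b) (hcd : c < d)
    (h : ({a, b} : Finset (Fin n)) = {c, d}) : a = c ∧ b = d := by
  have ha : a = c ∨ a = d := by
    have : a ∈ ({c, d} : Finset (Fin n)) := h ▸ by simp
    simpa using this
  have hb : b = c ∨ b = d := by
    have : b ∈ ({c, d} : Finset (Fin n)) := h ▸ by simp
    simpa using this
  have hc : c = a ∨ c = b := by
    have : c ∈ ({a, b} : Finset (Fin n)) := h.symm ▸ (by simp : c ∈ ({c, d} : Finset (Fin n)))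
    simpa using this
  rcases ha with rfl | rfl
  · rcases hb with rfl | rfl
    · exact absurd hab (lt_irrefl _)
    · exact ⟨rfl, rfl⟩
  · rcases hc with rfl | rfl
    · exact absurd hcd (lt_irrefl _)
    · exact absurd (hcd.trans hab) (lt_irrefl _)

lemma double_ite_sum {n : ℕ} {β : Type*} [AddCommMonoid β] (h : Fin n → Fin n → β) :
    ∑ i, ∑ j, (if i < j then h i j else 0)
      = ∑ p ∈ (univ ×ˢ univ : Finset (Fin n × Fin n)).filter (fun p => p.1 < p.2),
          h p.1 p.2 := by
  rw [sum_filter, Finset.sum_product]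

lemma sum_powersetCard_two {n : ℕ} {β : Type*} [AddCommMonoid β]
    (g : Finset (Fin n) → β) :
    ∑ t ∈ powersetCard 2 (univ : Finset (Fin n)), g t
      = ∑ i, ∑ j, if i < j then g {i, j} else 0 := by
  rw [double_ite_sum]
  refine (Finset.sum_bij (fun p _ => ({p.1, p.2} : Finset (Fin n))) ?_ ?_ ?_ ?_).symm
  · rintro ⟨a, b⟩ hp
    simp only [mem_filter] at hp
    exact mem_powersetCard_univ.2 (Finset.card_pair hp.2.ne)
  · rintro ⟨a, b⟩ ha ⟨c, d⟩ hc heq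
    simp only [mem_filter] at ha hc
    have heq' : ({a, b} : Finset (Fin n)) = {c, d} := heq
    obtain ⟨h1, h2⟩ := pair_eq_pair ha.2 hc.2 heq'
    simp [h1, h2]
  · intro t ht
    obtain ⟨a, b, hab, rfl⟩ := Finset.card_eq_two.1 (mem_powersetCard_univ.1 ht)
    rcases hab.lt_or_gt with h | h
    · exact ⟨(a, b), by simp [h], rfl⟩
    · exact ⟨(b, a), by simp [h], (Finset.pair_comm b a)⟩
  · intros; rfl

open scoped Classical in
lemma sum_swaps {n : ℕ} {β : Type*} [AddCommMonoid β]
    (g : Equiv.Perm (Fin n) → β) :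
    ∑ σ ∈ (univ : Finset (Equiv.Perm (Fin n))).filter (fun σ => σ.IsSwap), g σ
      = ∑ i, ∑ j, if i < j then g (Equiv.swap i j) else 0 := by
  rw [double_ite_sum]
  refine (Finset.sum_bij (fun p _ => Equiv.swap p.1 p.2) ?_ ?_ ?_ ?_).symm
  · rintro ⟨a, b⟩ hp
    simp only [mem_filter] at hp
    exact mem_filter.2 ⟨mem_univ _, ⟨a, b, hp.2.ne, rfl⟩⟩
  · rintro ⟨a, b⟩ ha ⟨c, d⟩ hc heq
    simp only [mem_filter] at ha hc
    have heq' : Equiv.swap a b = Equiv.swap c d := heq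
    have hsupp : ({a, b} : Finset (Fin n)) = {c, d} := by
      rw [← Equiv.Perm.support_swap ha.2.ne, ← Equiv.Perm.support_swap hc.2.ne, heq']
    obtain ⟨h1, h2⟩ := pair_eq_pair ha.2 hc.2 hsupp
    simp [h1, h2]
  · intro σ hσ
    obtain ⟨a, b, hab, hs⟩ := (mem_filter.1 hσ).2
    rcases hab.lt_or_gt with h | h
    · exact ⟨(a, b), by simp [h], hs.symm⟩
    · exact ⟨(b, a), by simp [h], by rw [hs, Equiv.swap_comm]⟩
  · intros; rfl

open scoped Classical in
lemma charpoly_coeff_two {n : ℕ} (hn : 2 ≤ n) (M : Matrix (Fin n) (Fin n) ℤ) :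
    M.charpoly.coeff (n - 2)
      = ∑ i, ∑ j, if i < j then (M i i * M j j - M i j * M j i) else 0 := by
  classical
  -- degree bound for each permutation term
  have hdeg : ∀ σ : Equiv.Perm (Fin n),
      (∏ i, charmatrix M (σ i) i).natDegree ≤ n - σ.support.card := by
    intro σ
    refine (Polynomial.natDegree_prod_le _ _).trans ?_
    have h1 : ∀ i : Fin n, (charmatrix M (σ i) i).natDegree ≤ if σ i = i then 1 else 0 := by
      intro i
      by_cases h : σ i = i
      · rw [if_pos h, h, charmatrix_apply_eq]
        exact (natDegree_X_sub_C _).le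
      · rw [if_neg h, charmatrix_apply_ne _ _ _ h]
        simp
    refine (Finset.sum_le_sum fun i _ => h1 i).trans ?_
    have h2 : (∑ i : Fin n, if σ i = i then 1 else 0)
        = #(univ.filter fun i : Fin n => σ i = i) := (Finset.card_filter _ _).symm
    rw [h2]
    have h3 : #(univ.filter fun i : Fin n => σ i = i)
        + #(univ.filter fun i : Fin n => ¬ σ i = i) = n := by
      rw [Finset.card_filter_add_card_filter_not]
      simp
    have h4 : σ.support = univ.filter fun i : Fin n => ¬ σ i = i := by
      ext x; simp [Equiv.Perm.mem_support]
    rw [h4]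
    omega
  -- expand determinant
  set f : Equiv.Perm (Fin n) → ℤ :=
    fun σ => (Equiv.Perm.sign σ : ℤ) *
      Polynomial.coeff (∏ i, charmatrix M (σ i) i) (n - 2) with hf
  have hdet : M.charpoly.coeff (n - 2) = ∑ σ : Equiv.Perm (Fin n), f σ := by
    rw [Matrix.charpoly, Matrix.det_apply', finset_sum_coeff]
    refine Finset.sum_congr rfl fun σ _ => ?_
    rw [hf]
    rw [show ((Equiv.Perm.sign σ : ℤ) : ℤ[X]) = Polynomial.C ((Equiv.Perm.sign σ : ℤ)) by
      simp, coeff_C_mul]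
  rw [hdet]
  -- only identity and swaps contribute
  have hsub : (insert (1 : Equiv.Perm (Fin n)) ((univ : Finset (Equiv.Perm (Fin n))).filter fun σ => σ.IsSwap)) ⊆ univ :=
    Finset.subset_univ _
  have hzero : ∀ σ ∈ (univ : Finset (Equiv.Perm (Fin n))),
      σ ∉ insert (1 : Equiv.Perm (Fin n)) ((univ : Finset (Equiv.Perm (Fin n))).filter fun σ => σ.IsSwap) → f σ = 0 := by
    intro σ _ hσ
    simp only [Finset.mem_insert, Finset.mem_filter, Finset.mem_univ, true_and] at hσ
    push_neg at hσ
    obtain ⟨h1, h2⟩ := hσ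
    have hc0 : σ.support.card ≠ 0 := by
      rw [Ne, Finset.card_eq_zero, Equiv.Perm.support_eq_empty_iff]
      exact h1
    have hc1 : σ.support.card ≠ 1 := Equiv.Perm.card_support_ne_one σ
    have hc2 : σ.support.card ≠ 2 := fun h => h2 (Equiv.Perm.card_support_eq_two.1 h)
    have hcle : σ.support.card ≤ n := by
      simpa using Finset.card_le_card σ.support.subset_univ ..
    have : (∏ i, charmatrix M (σ i) i).natDegree < n - 2 := by
      have := hdeg σ; omega
    rw [hf]
    simp [Polynomial.coeff_eq_zero_of_natDegree_lt this]
  rw [← Finset.sum_subset hsub hzero, Finset.sum_insert (by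
    simp only [Finset.mem_filter, Finset.mem_univ, true_and]
    intro h
    have := Equiv.Perm.card_support_eq_two.2 h
    simp [Equiv.Perm.support_one] at this)]
  -- identity term
  have hid : f 1 = ∑ i, ∑ j, if i < j then M i i * M j j else 0 := by
    rw [hf]
    simp only [Equiv.Perm.sign_one, Units.val_one, Int.cast_one, one_mul, Equiv.Perm.one_apply]
    have : (∏ i : Fin n, charmatrix M i i) = ∏ i : Fin n, (X + C (- M i i)) := by
      refine Finset.prod_congr rfl fun i _ => ?_
      rw [charmatrix_apply_eq, map_neg, sub_eq_add_neg]
    rw [this]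
    have hcard : n - 2 ≤ #(univ : Finset (Fin n)) := by simp
    rw [Finset.prod_X_add_C_coeff _ _ hcard]
    have hc2 : #(univ : Finset (Fin n)) - (n - 2) = 2 := by simp; omega
    rw [hc2, sum_powersetCard_two (fun t => ∏ i ∈ t, (- M i i))]
    refine Finset.sum_congr rfl fun i _ => Finset.sum_congr rfl fun j _ => ?_
    by_cases h : i < j
    · rw [if_pos h, if_pos h, Finset.prod_pair h.ne]; ring
    · rw [if_neg h, if_neg h]
  -- swap terms
  have hswap : ∑ σ ∈ (univ : Finset (Equiv.Perm (Fin n))).filter (fun σ => σ.IsSwap), f σ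
      = ∑ i, ∑ j, if i < j then -(M i j * M j i) else 0 := by
    rw [sum_swaps f]
    refine Finset.sum_congr rfl fun i _ => Finset.sum_congr rfl fun j _ => ?_
    by_cases h : i < j
    · rw [if_pos h, if_pos h, hf]
      simp only []
      have hne : i ≠ j := h.ne
      have hsign : (Equiv.Perm.sign (Equiv.swap i j) : ℤ) = -1 := by
        rw [Equiv.Perm.sign_swap hne]; rfl
      have hprod : (∏ k, charmatrix M ((Equiv.swap i j) k) k)
          = (∏ k ∈ univ \ {i, j}, (X - C (M k k))) * (C (M j i) * C (M i j)) := by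
        rw [← Finset.prod_sdiff (Finset.subset_univ ({i, j} : Finset (Fin n)))]
        congr 1
        · refine Finset.prod_congr rfl fun k hk => ?_
          simp only [Finset.mem_sdiff, Finset.mem_insert, Finset.mem_singleton] at hk
          push_neg at hk
          rw [Equiv.swap_apply_of_ne_of_ne hk.2.1 hk.2.2, charmatrix_apply_eq]
        · rw [Finset.prod_pair hne]
          rw [Equiv.swap_apply_left, Equiv.swap_apply_right]
          rw [charmatrix_apply_ne _ _ _ (Ne.symm hne), charmatrix_apply_ne _ _ _ hne]
          ring
      simp only [hprod]
      have hmonic : (∏ k ∈ univ \ {i, j}, ((X : ℤ[X]) - C (M k k))).Monic :=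
        monic_prod_of_monic _ _ fun k _ => monic_X_sub_C _
      have hnd : (∏ k ∈ univ \ {i, j}, ((X : ℤ[X]) - C (M k k))).natDegree = n - 2 := by
        rw [natDegree_prod_of_monic _ _ fun k _ => monic_X_sub_C _]
        simp only [natDegree_X_sub_C, Finset.sum_const, smul_eq_mul, mul_one]
        rw [Finset.card_sdiff_of_subset (Finset.subset_univ _), Finset.card_pair hne]
        simp
      rw [← C_mul, coeff_mul_C, ← hnd, hmonic.coeff_natDegree, hsign]
      ring
    · rw [if_neg h, if_neg h]
  rw [hid, hswap, ← Finset.sum_add_distrib]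
  refine Finset.sum_congr rfl fun i _ => ?_
  rw [← Finset.sum_add_distrib]
  refine Finset.sum_congr rfl fun j _ => ?_
  by_cases h : i < j
  · rw [if_pos h, if_pos h, if_pos h]; ring
  · rw [if_neg h, if_neg h, if_neg h]; ring

lemma det_one_sub_sq_zero {n : ℕ} (N : Matrix (Fin n) (Fin n) ℤ) (hN2 : N * N = 0) :
    (1 - N).det = 1 := by
  have hnil : IsNilpotent N := ⟨2, by rw [pow_two]; exact hN2⟩
  have hcp : N.charpoly = X ^ (Fintype.card (Fin n)) := by
    have h := Matrix.isNilpotent_charpoly_sub_pow_of_isNilpotent hnil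
    have := h.eq_zero
    linear_combination this
  have heval : (N.charpoly).eval 1 = (1 - N).det := by
    rw [Matrix.charpoly, ← Polynomial.coe_evalRingHom, RingHom.map_det]
    congr 1
    ext i j
    by_cases h : i = j
    · subst h; simp [charmatrix_apply_eq, Matrix.sub_apply, Matrix.one_apply]
    · simp [charmatrix_apply_ne _ _ _ h, Matrix.sub_apply, Matrix.one_apply, h]
  rw [← heval, hcp]
  simp

lemma two_mul_choose_two (k : ℕ) : ((k.choose 2 : ℕ) : ℤ) * 2 = (k : ℤ) * ((k : ℤ) - 1) := by
  induction k with
  | zero => simp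
  | succ k ih =>
    rw [show k + 1 = k.succ from rfl, Nat.choose_succ_succ]
    push_cast
    push_cast at ih
    rw [Nat.choose_one_right] at *
    linarith [ih]

lemma two_mul_sum_lt {n : ℕ} (g : Fin n → Fin n → ℤ) (hsymm : ∀ i j, g i j = g j i) :
    2 * (∑ i, ∑ j, if i < j then g i j else 0) = (∑ i, ∑ j, g i j) - ∑ i, g i i := by
  have expand : ∀ i j : Fin n, g i j =
      (if i < j then g i j else 0) + (if j < i then g i j else 0)
        + (if i = j then g i j else 0) := by
    intro i j
    rcases lt_trichotomy i j with h | h | h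
    · simp [h, asymm h, h.ne]
    · simp [h, lt_irrefl]
    · simp [h, asymm h, h.ne']
  have hmain : (∑ i, ∑ j, g i j)
      = (∑ i, ∑ j, if i < j then g i j else 0) + (∑ i, ∑ j, if j < i then g i j else 0)
        + (∑ i, ∑ j, if i = j then g i j else 0) := by
    rw [← Finset.sum_add_distrib, ← Finset.sum_add_distrib]
    refine Finset.sum_congr rfl fun i _ => ?_
    rw [← Finset.sum_add_distrib, ← Finset.sum_add_distrib]
    exact Finset.sum_congr rfl fun j _ => expand i j
  have h2 : (∑ i, ∑ j, if j < i then g i j else 0)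
      = ∑ i, ∑ j, if i < j then g i j else 0 := by
    rw [Finset.sum_comm]
    refine Finset.sum_congr rfl fun a _ => Finset.sum_congr rfl fun b _ => ?_
    by_cases h : a < b
    · rw [if_pos h, if_pos h, hsymm]
    · rw [if_neg h, if_neg h]
  have h3 : (∑ i, ∑ j, if i = j then g i j else 0) = ∑ i, g i i := by
    refine Finset.sum_congr rfl fun i _ => ?_
    simp
  rw [hmain, h2, h3]
  ring

set_option maxHeartbeats 1000000 in
/-- Theorem 1.1 (first part) of the paper: coefficients `a₁, a₂` of the Coxeter
polynomial of a bipartite quiver without parallel arrows, encoded by its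
adjacency matrix `N` (a 0-1 matrix with `N² = 0`). -/
theorem coxeter_coeffs_bipartite_quiver (n : ℕ) (hn : 2 ≤ n)
    (N : Matrix (Fin n) (Fin n) ℤ)
    (h01 : ∀ i j, N i j = 0 ∨ N i j = 1) (hN2 : N * N = 0) :
    let C : Matrix (Fin n) (Fin n) ℤ := 1 - N
    let φ : ℤ[X] := ((X : ℤ[X]) • C.map Polynomial.C + Cᵀ.map Polynomial.C).det
    let e : ℤ := ∑ i, ∑ j, N i j
    let d : Fin n → ℤ := fun i => (∑ j, N i j) + (∑ j, N j i)
    let q : ℤ := ∑ i, ∑ j, if i < j then (((N * Nᵀ) i j).toNat.choose 2 : ℤ) else 0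
    φ.coeff (n - 1) = n - e ∧
      2 * φ.coeff (n - 2) =
        (n - e) * (n - 1 - e) + 2 * e - 4 * q - ∑ i, d i * (d i - 1) := by
  intro C φ e d q
  have inst : Nonempty (Fin n) := ⟨⟨0, by omega⟩⟩
  have hT2 : Nᵀ * Nᵀ = 0 := by rw [← Matrix.transpose_mul, hN2, Matrix.transpose_zero]
  set A : Matrix (Fin n) (Fin n) ℤ := (1 + N) * (1 - Nᵀ) with hA
  -- the factorization
  have hCA : C * A = Cᵀ := by
    show (1 - N) * A = (1 - N)ᵀ
    have h1 : (1 - N) * ((1 + N) * (1 - Nᵀ)) = (1 - N * N) * (1 - Nᵀ) := by noncomm_ring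
    rw [hA, h1, hN2, sub_zero, one_mul, Matrix.transpose_sub, Matrix.transpose_one]
  have hφ : φ = (-A).charpoly := by
    have hcm : charmatrix (-A) = (X : ℤ[X]) • (1 : Matrix (Fin n) (Fin n) ℤ[X])
        + A.map Polynomial.C := by
      ext i j
      by_cases h : i = j
      · subst h
        simp [charmatrix_apply_eq, Matrix.smul_apply, Matrix.one_apply, Matrix.add_apply,
          sub_eq_add_neg, Matrix.neg_apply]
      · simp [charmatrix_apply_ne _ _ _ h, Matrix.one_apply, h, Matrix.add_apply,
          Matrix.smul_apply, Matrix.neg_apply]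
    have hfac : (X : ℤ[X]) • C.map Polynomial.C + Cᵀ.map Polynomial.C
        = C.map Polynomial.C * charmatrix (-A) := by
      rw [hcm, Matrix.mul_add, Matrix.mul_smul, Matrix.mul_one, ← Matrix.map_mul, hCA]
    have hdet1 : (C.map ⇑(Polynomial.C : ℤ →+* ℤ[X])).det = 1 := by
      rw [← RingHom.mapMatrix_apply, ← RingHom.map_det, det_one_sub_sq_zero N hN2, Polynomial.C_1]
    show ((X : ℤ[X]) • C.map Polynomial.C + Cᵀ.map Polynomial.C).det = _
    rw [hfac, Matrix.det_mul, hdet1, one_mul, Matrix.charpoly]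
  -- trace facts
  have htrP : Matrix.trace (N * Nᵀ) = e := by
    show ∑ i, (N * Nᵀ) i i = e
    have : ∀ i : Fin n, (N * Nᵀ) i i = ∑ j, N i j := by
      intro i
      rw [Matrix.mul_apply]
      refine Finset.sum_congr rfl fun j _ => ?_
      rw [Matrix.transpose_apply]
      rcases h01 i j with h | h <;> rw [h] <;> ring
    simp only [this]
    rfl
  have htrA : Matrix.trace A = (n : ℤ) - e := by
    have hA' : A = 1 + (N - Nᵀ - N * Nᵀ) := by rw [hA]; noncomm_ring
    rw [hA', Matrix.trace_add, Matrix.trace_sub, Matrix.trace_sub, Matrix.trace_one,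
      Matrix.trace_transpose, htrP, Fintype.card_fin]
    ring
  -- first coefficient
  have h1 : φ.coeff (n - 1) = Matrix.trace A := by
    rw [hφ]
    have h := Matrix.trace_eq_neg_charpoly_coeff (-A)
    rw [Fintype.card_fin, Matrix.trace_neg] at h
    linarith
  refine ⟨by rw [h1, htrA], ?_⟩
  -- second coefficient
  have hc2 : φ.coeff (n - 2)
      = ∑ i, ∑ j, if i < j then (A i i * A j j - A i j * A j i) else 0 := by
    rw [hφ, charpoly_coeff_two hn]
    refine Finset.sum_congr rfl fun i _ => Finset.sum_congr rfl fun j _ => ?_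
    by_cases h : i < j
    · rw [if_pos h, if_pos h]; simp only [Matrix.neg_apply]; ring
    · rw [if_neg h, if_neg h]
  have hgsym : ∀ i j : Fin n, A i i * A j j - A i j * A j i
      = A j j * A i i - A j i * A i j := by intro i j; ring
  have key : 2 * φ.coeff (n - 2) = Matrix.trace A * Matrix.trace A - Matrix.trace (A * A) := by
    rw [hc2, two_mul_sum_lt _ hgsym]
    have hS0 : ∑ i : Fin n, (A i i * A i i - A i i * A i i) = 0 := by simp
    have hS1 : ∑ i : Fin n, ∑ j : Fin n, (A i i * A j j - A i j * A j i)
        = (∑ i : Fin n, ∑ j : Fin n, A i i * A j j)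
          - ∑ i : Fin n, ∑ j : Fin n, A i j * A j i := by
      rw [← Finset.sum_sub_distrib]
      exact Finset.sum_congr rfl fun i _ => by rw [← Finset.sum_sub_distrib]
    have hS2 : (∑ i : Fin n, ∑ j : Fin n, A i i * A j j)
        = Matrix.trace A * Matrix.trace A := by
      rw [Matrix.trace, Finset.sum_mul_sum]
      rfl
    have hS3 : (∑ i : Fin n, ∑ j : Fin n, A i j * A j i) = Matrix.trace (A * A) := by
      rw [Matrix.trace]
      exact (Finset.sum_congr rfl fun i _ => by rw [Matrix.diag_apply, Matrix.mul_apply]).symm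
    rw [hS0, hS1, hS2, hS3]
    ring
  -- trace of A*A
  set B : Matrix (Fin n) (Fin n) ℤ := N - Nᵀ - N * Nᵀ with hBdef
  have hz1 : N * (N * Nᵀ) = 0 := by rw [← Matrix.mul_assoc, hN2, Matrix.zero_mul]
  have hz2 : (N * Nᵀ) * Nᵀ = 0 := by rw [Matrix.mul_assoc, hT2, Matrix.mul_zero]
  have htr3 : Matrix.trace (Nᵀ * (N * Nᵀ)) = 0 := by
    rw [Matrix.trace_mul_comm, hz2, Matrix.trace_zero]
  have htr4 : Matrix.trace ((N * Nᵀ) * N) = 0 := by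
    rw [Matrix.trace_mul_comm, hz1, Matrix.trace_zero]
  have htr5 : Matrix.trace (Nᵀ * N) = e := by rw [Matrix.trace_mul_comm, htrP]
  have htrB : Matrix.trace B = -e := by
    rw [hBdef, Matrix.trace_sub, Matrix.trace_sub, Matrix.trace_transpose, htrP]
    ring
  have hBB : B * B = N * N - N * Nᵀ - N * (N * Nᵀ) - Nᵀ * N + Nᵀ * Nᵀ + Nᵀ * (N * Nᵀ)
      - (N * Nᵀ) * N + (N * Nᵀ) * Nᵀ + (N * Nᵀ) * (N * Nᵀ) := by
    rw [hBdef]; noncomm_ring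
  have htrBB : Matrix.trace (B * B) = Matrix.trace ((N * Nᵀ) * (N * Nᵀ)) - 2 * e := by
    rw [hBB, hN2, hT2, hz1, hz2]
    simp only [Matrix.trace_add, Matrix.trace_sub, Matrix.trace_zero, htr3, htr4, htr5, htrP]
    ring
  have hAB : A = 1 + B := by rw [hA, hBdef]; noncomm_ring
  have hAA : A * A = 1 + B + B + B * B := by rw [hAB]; noncomm_ring
  have htrAA : Matrix.trace (A * A)
      = (n : ℤ) - 4 * e + Matrix.trace ((N * Nᵀ) * (N * Nᵀ)) := by
    rw [hAA, Matrix.trace_add, Matrix.trace_add, Matrix.trace_add, Matrix.trace_one,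
      htrB, htrBB, Fintype.card_fin]
    ring
  -- combinatorial identity for trace ((N Nᵀ)²)
  have hprod0 : ∀ i j k : Fin n, N i j * N j k = 0 := by
    intro i j k
    have hsum : ∑ l, N i l * N l k = 0 := by
      have := congrFun (congrFun hN2 i) k
      simpa [Matrix.mul_apply] using this
    have hnn : ∀ l ∈ (univ : Finset (Fin n)), 0 ≤ N i l * N l k := by
      intro l _
      have h1 : (0 : ℤ) ≤ N i l := by rcases h01 i l with h | h <;> simp [h]
      have h2 : (0 : ℤ) ≤ N l k := by rcases h01 l k with h | h <;> simp [h]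
      exact mul_nonneg h1 h2
    exact (Finset.sum_eq_zero_iff_of_nonneg hnn).1 hsum j (Finset.mem_univ j)
  set m : Matrix (Fin n) (Fin n) ℤ := N * Nᵀ with hmdef
  have hm : ∀ i j, m i j = ∑ k, N i k * N j k := by
    intro i j; rw [hmdef, Matrix.mul_apply]; simp [Matrix.transpose_apply]
  have hmsymm : ∀ i j, m j i = m i j := by
    intro i j; rw [hm, hm]; exact Finset.sum_congr rfl fun k _ => mul_comm _ _
  have hmnn : ∀ i j, 0 ≤ m i j := by
    intro i j; rw [hm]
    refine Finset.sum_nonneg fun k _ => mul_nonneg ?_ ?_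
    · rcases h01 i k with h | h <;> simp [h]
    · rcases h01 j k with h | h <;> simp [h]
  have hmii : ∀ i, m i i = ∑ k, N i k := by
    intro i; rw [hm]
    refine Finset.sum_congr rfl fun k _ => ?_
    rcases h01 i k with h | h <;> rw [h] <;> ring
  have htrmm : Matrix.trace (m * m) = ∑ i, ∑ j, m i j * m i j := by
    rw [Matrix.trace]
    refine Finset.sum_congr rfl fun i _ => ?_
    rw [Matrix.diag_apply, Matrix.mul_apply]
    exact Finset.sum_congr rfl fun j _ => by rw [hmsymm j i]
  -- q in terms of m
  have h2q : 2 * q = ∑ i, ∑ j, if i < j then (m i j * m i j - m i j) else 0 := by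
    show 2 * (∑ i, ∑ j, if i < j then (((N * Nᵀ) i j).toNat.choose 2 : ℤ) else 0) = _
    rw [Finset.mul_sum]
    refine Finset.sum_congr rfl fun i _ => ?_
    rw [Finset.mul_sum]
    refine Finset.sum_congr rfl fun j _ => ?_
    by_cases h : i < j
    · rw [if_pos h, if_pos h]
      have h1 := two_mul_choose_two ((m i j).toNat)
      rw [Int.toNat_of_nonneg (hmnn i j)] at h1
      show 2 * ((((m i j).toNat.choose 2 : ℕ)) : ℤ) = m i j * m i j - m i j
      linarith [h1]
    · rw [if_neg h, if_neg h]; ring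
  have hq4 : 4 * q = ((∑ i, ∑ j, (m i j * m i j - m i j))
      - ∑ i, (m i i * m i i - m i i)) := by
    have hgs : ∀ i j : Fin n, m i j * m i j - m i j = m j i * m j i - m j i := by
      intro i j; rw [hmsymm j i]
    have := two_mul_sum_lt (fun i j => m i j * m i j - m i j) hgs
    rw [← h2q] at this
    linarith
  -- sum of all entries of m
  have hsum_m : ∑ i, ∑ j, m i j = ∑ k, (∑ i, N i k) * (∑ j, N j k) := by
    calc ∑ i, ∑ j, m i j = ∑ i, ∑ j, ∑ k, N i k * N j k := by
          exact Finset.sum_congr rfl fun i _ => Finset.sum_congr rfl fun j _ => hm i j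
      _ = ∑ i, ∑ k, ∑ j, N i k * N j k :=
          Finset.sum_congr rfl fun i _ => Finset.sum_comm
      _ = ∑ k, ∑ i, ∑ j, N i k * N j k := Finset.sum_comm
      _ = ∑ k, (∑ i, N i k) * (∑ j, N j k) :=
          Finset.sum_congr rfl fun k _ => (Finset.sum_mul_sum _ _ _ _).symm
  have hOT : ∀ i : Fin n, (∑ j, N i j) * (∑ j, N j i) = 0 := by
    intro i
    rw [Finset.sum_mul_sum]
    refine Finset.sum_eq_zero fun j _ => Finset.sum_eq_zero fun k _ => ?_
    rw [mul_comm]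
    exact hprod0 k i j
  have hd2 : ∀ i : Fin n, d i * d i
      = (∑ j, N i j) * (∑ j, N i j) + (∑ j, N j i) * (∑ j, N j i) := by
    intro i
    show ((∑ j, N i j) + (∑ j, N j i)) * ((∑ j, N i j) + (∑ j, N j i)) = _
    linear_combination (2 : ℤ) * hOT i
  have he : e = ∑ i, ∑ j, N i j := rfl
  have hsum_d : ∑ i, d i = 2 * e := by
    show ∑ i : Fin n, ((∑ j, N i j) + (∑ j, N j i)) = 2 * e
    rw [Finset.sum_add_distrib, he, Finset.sum_comm (f := fun i j => N j i)]
    ring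
  -- the identity  trace(m*m) = 4q + Σ d² - e
  have hs : Matrix.trace (m * m) = 4 * q + (∑ i, d i * d i) - e := by
    have hSD : ∑ i, (m i i * m i i - m i i)
        = (∑ i, (∑ j, N i j) * (∑ j, N i j)) - e := by
      rw [Finset.sum_sub_distrib, he]
      have ha : ∑ i, m i i * m i i = ∑ i, (∑ j, N i j) * (∑ j, N i j) :=
        Finset.sum_congr rfl fun i _ => by rw [hmii]
      have hb : ∑ i, m i i = ∑ i, ∑ j, N i j :=
        Finset.sum_congr rfl fun i _ => hmii i
      rw [ha, hb]
    have hSM : ∑ i, ∑ j, m i j = ∑ i, (∑ j, N j i) * (∑ j, N j i) := by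
      rw [hsum_m]
    have hS2 : ∑ i, ∑ j, (m i j * m i j - m i j)
        = (∑ i, ∑ j, m i j * m i j) - ∑ i, ∑ j, m i j := by
      rw [← Finset.sum_sub_distrib]
      exact Finset.sum_congr rfl fun i _ => by rw [← Finset.sum_sub_distrib]
    have hD2 : ∑ i, d i * d i
        = (∑ i, (∑ j, N i j) * (∑ j, N i j)) + ∑ i, (∑ j, N j i) * (∑ j, N j i) := by
      rw [← Finset.sum_add_distrib]
      exact Finset.sum_congr rfl fun i _ => hd2 i
    rw [htrmm]
    rw [hS2] at hq4
    rw [hSD] at hq4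
    linarith [hq4, hSM, hD2]
  -- assemble
  have hdd : ∑ i, d i * (d i - 1) = (∑ i, d i * d i) - 2 * e := by
    have : ∑ i, d i * (d i - 1) = (∑ i, d i * d i) - ∑ i, d i := by
      rw [← Finset.sum_sub_distrib]
      exact Finset.sum_congr rfl fun i _ => by ring
    rw [this, hsum_d]
  rw [key, htrA, htrAA, hdd]
  rw [show Matrix.trace ((N * Nᵀ) * (N * Nᵀ)) = Matrix.trace (m * m) from rfl, hs]
  ring
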